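/- For metric spaces X and Y, the asymptotic dimension of the product X × Y (with the sup or ℓ¹ product metric) is at most asdim(X) + asdim(Y). -/

import Mathlib

/-- `AsdimLEd d n`: the space with distance function `d` has asymptotic dimension
at most `n`: for every `R > 0` there is a cover by sets of diameter uniformly
bounded by some `B` such that every `R`-ball meets at most `n+1` members. -/
def AsdimLEd {X : Type*} (d : X → X → ℝ) (n : ℕ) : Prop :=
  ∀ R : ℝ, 0 < R → ∃ (𝒰 : Set (Set X)) (B : ℝ),
    (∀ x : X, ∃ u ∈ 𝒰, x ∈ u) ∧
    (∀ u ∈ 𝒰, ∀ x ∈ u, ∀ y ∈ u, d x y ≤ B) ∧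
    (∀ x : X, {u | u ∈ 𝒰 ∧ ∃ y ∈ u, d x y < R}.Finite ∧
      {u | u ∈ 𝒰 ∧ ∃ y ∈ u, d x y < R}.ncard ≤ n + 1)

/-- Asymptotic dimension at most `n` of a (pseudo)metric space. -/
def AsdimLE (X : Type*) [PseudoMetricSpace X] (n : ℕ) : Prop :=
  AsdimLEd (fun x y : X => dist x y) n

/-- `f` is an `(L,C)`-quasi-isometric embedding. -/
def IsQIE {X Y : Type*} [PseudoMetricSpace X] [PseudoMetricSpace Y]
    (f : X → Y) (L C : ℝ) : Prop :=
  ∀ x x' : X, dist x x' / L - C ≤ dist (f x) (f x') ∧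
    dist (f x) (f x') ≤ L * dist x x' + C

open Metric Set

/-- Ostrand-type colored decomposition: if `asdim X ≤ n`, then for every `r > 0`
and every `K`, there are `K+1` uniformly bounded `r`-disjoint families such that
every point belongs to a member of at least `K+1-n` of the families. -/
lemma ostrand_asdim {X : Type*} [MetricSpace X] {n : ℕ} (h : AsdimLE X n)
    (K : ℕ) {r : ℝ} (hr : 0 < r) :
    ∃ (F : Fin (K+1) → Set (Set X)) (B : ℝ),
      (∀ j, ∀ w ∈ F j, ∀ x ∈ w, ∀ y ∈ w, dist x y ≤ B) ∧
      (∀ j, ∀ w ∈ F j, ∀ w' ∈ F j, w ≠ w' → ∀ x ∈ w, ∀ y ∈ w', r ≤ dist x y) ∧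
      (∀ x : X, ∃ J : Finset (Fin (K+1)), (∀ j ∈ J, ∃ w ∈ F j, x ∈ w) ∧
        K + 1 ≤ J.card + n) := by
  classical
  obtain ⟨𝒰, B, hcov, hbdd, hmult⟩ := h (((K : ℝ)+2)*r) (by positivity)
  -- the "level `j` sets near `x`"
  set Sig : X → ℕ → Set (Set X) :=
    fun x j => {u | u ∈ 𝒰 ∧ u.Nonempty ∧ infDist x u < ((j : ℝ)+1)*r} with hSigdef
  have hmono : ∀ (x : X) (j j' : ℕ), j ≤ j' → Sig x j ⊆ Sig x j' := by
    intro x j j' hjj u hu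
    refine ⟨hu.1, hu.2.1, lt_of_lt_of_le hu.2.2 ?_⟩
    have hc : ((j : ℝ)+1) ≤ ((j' : ℝ)+1) := by
      have := (Nat.cast_le (α := ℝ)).mpr hjj; linarith
    nlinarith [hr.le]
  have hsub : ∀ (x : X) (j : ℕ), j ≤ K+1 →
      Sig x j ⊆ {u | u ∈ 𝒰 ∧ ∃ y ∈ u, dist x y < ((K : ℝ)+2)*r} := by
    intro x j hj u hu
    refine ⟨hu.1, ?_⟩
    have h1 : infDist x u < ((K : ℝ)+2)*r := by
      refine lt_of_lt_of_le hu.2.2 ?_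
      have hj' : (j : ℝ) ≤ (K : ℝ) + 1 := by exact_mod_cast hj
      nlinarith [hr.le]
    exact (infDist_lt_iff hu.2.1).mp h1
  have hfin : ∀ (x : X) (j : ℕ), j ≤ K+1 → (Sig x j).Finite :=
    fun x j hj => (hmult x).1.subset (hsub x j hj)
  have hcard : ∀ (x : X) (j : ℕ), j ≤ K+1 → (Sig x j).ncard ≤ n+1 :=
    fun x j hj => le_trans (Set.ncard_le_ncard (hsub x j hj) (hmult x).1) (hmult x).2
  have h0 : ∀ x : X, (Sig x 0).Nonempty := by
    intro x
    obtain ⟨u, hu𝒰, hxu⟩ := hcov x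
    refine ⟨u, hu𝒰, ⟨x, hxu⟩, ?_⟩
    rw [infDist_zero_of_mem hxu]
    push_cast; linarith
  -- the pieces
  set W : ℕ → Set (Set X) → Set X :=
    fun j σ => {x | Sig x j = σ ∧ Sig x (j+1) = σ} with hWdef
  refine ⟨fun j => Set.range (W j.1), B + 2*(((K : ℝ)+2)*r), ?_, ?_, ?_⟩
  · -- uniformly bounded
    rintro j w ⟨σ, rfl⟩ x hx y hy
    obtain ⟨u0, hu0⟩ := h0 x
    have hu0σ : u0 ∈ σ := hx.1 ▸ hmono x 0 j.1 (Nat.zero_le _) hu0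
    have hu0x : u0 ∈ Sig x j.1 := hx.1 ▸ hu0σ
    have hu0y : u0 ∈ Sig y j.1 := hy.1 ▸ hu0σ
    have hL : ((j.1 : ℝ)+1)*r ≤ ((K : ℝ)+2)*r := by
      have hj' : (j.1 : ℝ) ≤ (K : ℝ) := by exact_mod_cast Nat.lt_succ_iff.mp j.isLt
      nlinarith [hr.le]
    obtain ⟨p, hpu, hxp⟩ := (infDist_lt_iff hu0x.2.1).mp (lt_of_lt_of_le hu0x.2.2 hL)
    obtain ⟨q, hqu, hyq⟩ := (infDist_lt_iff hu0y.2.1).mp (lt_of_lt_of_le hu0y.2.2 hL)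
    have hpq : dist p q ≤ B := hbdd u0 hu0x.1 p hpu q hqu
    calc dist x y ≤ dist x p + dist p q + dist q y := dist_triangle4 x p q y
      _ ≤ ((K : ℝ)+2)*r + B + ((K : ℝ)+2)*r := by
          have : dist q y = dist y q := dist_comm q y
          rw [this]; linarith
      _ = B + 2*(((K : ℝ)+2)*r) := by ring
  · -- r-disjointness within a family
    rintro j w ⟨σ, rfl⟩ w' ⟨τ, rfl⟩ hne x hx y hy
    have hστ : σ ≠ τ := by rintro rfl; exact hne rfl
    have key : ∀ (a b : X) (σ' τ' : Set (Set X)), a ∈ W j.1 σ' → b ∈ W j.1 τ' →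
        (∃ u, u ∈ σ' ∧ u ∉ τ') → r ≤ dist a b := by
      rintro a b σ' τ' ha hb ⟨u, huσ, huτ⟩
      have hua : u ∈ Sig a j.1 := ha.1 ▸ huσ
      have hub : u ∉ Sig b (j.1+1) := fun hc => huτ (hb.2 ▸ hc)
      have h2 : ((j.1 : ℝ)+1+1)*r ≤ infDist b u := by
        by_contra hlt
        push_neg at hlt
        exact hub ⟨hua.1, hua.2.1, by push_cast; linarith⟩
      have h3 : infDist b u ≤ infDist a u + dist a b := by
        have := infDist_le_infDist_add_dist (x := b) (y := a) (s := u)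
        rwa [dist_comm b a] at this
      have h4 : infDist a u < ((j.1 : ℝ)+1)*r := hua.2.2
      nlinarith
    by_cases hex : ∃ u, u ∈ σ ∧ u ∉ τ
    · exact key x y σ τ hx hy hex
    · have hex' : ∃ u, u ∈ τ ∧ u ∉ σ := by
        by_contra hex2
        push_neg at hex hex2
        exact hστ (Set.Subset.antisymm hex hex2)
      rw [dist_comm]
      exact key y x τ σ hy hx hex'
  · -- every point is in many families
    intro x
    refine ⟨Finset.univ.filter (fun j : Fin (K+1) => Sig x (j.1+1) = Sig x j.1), ?_, ?_⟩
    · intro j hj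
      have hst : Sig x (j.1+1) = Sig x j.1 := (Finset.mem_filter.mp hj).2
      exact ⟨W j.1 (Sig x j.1), ⟨Sig x j.1, rfl⟩, rfl, hst⟩
    · set U : Finset (Fin (K+1)) :=
        Finset.univ.filter (fun j : Fin (K+1) => ¬ Sig x (j.1+1) = Sig x j.1) with hUdef
      have hsplit : (Finset.univ.filter
            (fun j : Fin (K+1) => Sig x (j.1+1) = Sig x j.1)).card + U.card = K+1 := by
        rw [hUdef, Finset.card_filter_add_card_filter_not]
        simp
      have hU : U.card ≤ n := by
        set g : Fin (K+1) → Set X := fun j =>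
          if hj : ((Sig x (j.1+1)) \ (Sig x j.1)).Nonempty then hj.choose else ∅ with hgdef
        have hg : ∀ j ∈ U, g j ∈ (Sig x (j.1+1)) \ (Sig x j.1) := by
          intro j hj
          have hne : ¬ Sig x (j.1+1) = Sig x j.1 := (Finset.mem_filter.mp hj).2
          have hnonempty : ((Sig x (j.1+1)) \ (Sig x j.1)).Nonempty := by
            rw [Set.diff_nonempty]
            intro hss
            exact hne (Set.Subset.antisymm hss (hmono x j.1 (j.1+1) (Nat.le_succ _)))
          rw [hgdef]; simp only [dif_pos hnonempty]
          exact hnonempty.choose_spec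
        have hinj : Set.InjOn g U := by
          intro j hj j' hj' heq
          by_contra hjj
          rcases lt_or_gt_of_ne hjj with hlt | hlt
          · have h1 : g j ∈ Sig x j'.1 :=
              hmono x (j.1+1) j'.1 (Nat.succ_le_of_lt hlt) (hg j hj).1
            rw [heq] at h1
            exact (hg j' hj').2 h1
          · have h1 : g j' ∈ Sig x j.1 :=
              hmono x (j'.1+1) j.1 (Nat.succ_le_of_lt hlt) (hg j' hj').1
            rw [← heq] at h1
            exact (hg j hj).2 h1
        have htfin : ((Sig x (K+1)) \ (Sig x 0)).Finite :=
          (hfin x (K+1) le_rfl).diff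
        have hmap : ∀ j ∈ U, g j ∈ htfin.toFinset := by
          intro j hj
          rw [Set.Finite.mem_toFinset]
          refine ⟨hmono x (j.1+1) (K+1) (Nat.succ_le_of_lt j.isLt) (hg j hj).1, ?_⟩
          intro hc
          exact (hg j hj).2 (hmono x 0 j.1 (Nat.zero_le _) hc)
        have h5 : U.card ≤ htfin.toFinset.card :=
          Finset.card_le_card_of_injOn g hmap (fun a ha b hb => hinj ha hb)
        have h6 : htfin.toFinset.card = ((Sig x (K+1)) \ (Sig x 0)).ncard :=
          (Set.ncard_eq_toFinset_card _ htfin).symm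
        have h7 : ((Sig x (K+1)) \ (Sig x 0)).ncard
            = (Sig x (K+1)).ncard - (Sig x 0).ncard :=
          Set.ncard_diff (hmono x 0 (K+1) (Nat.zero_le _)) (hfin x 0 (by omega))
        have h8 : 1 ≤ (Sig x 0).ncard :=
          (Set.ncard_pos (hfin x 0 (by omega))).mpr (h0 x)
        have h9 : (Sig x (K+1)).ncard ≤ n+1 := hcard x (K+1) le_rfl
        omega
      omega

/-- The asymptotic dimension of a product (with the sup product metric) is at most
the sum of the asymptotic dimensions of the factors. -/
theorem asdim_prod {X Y : Type*} [MetricSpace X] [MetricSpace Y]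
    (m n : ℕ) (hX : AsdimLE X m) (hY : AsdimLE Y n) : AsdimLE (X × Y) (m + n) := by
  classical
  intro R hR
  have hr : (0 : ℝ) < 2*R + 1 := by linarith
  obtain ⟨F, BX, hFb, hFs, hFc⟩ := ostrand_asdim (n := m) hX (m+n) hr
  obtain ⟨G, BY, hGb, hGs, hGc⟩ := ostrand_asdim (n := n) hY (m+n) hr
  set 𝒰 : Set (Set (X × Y)) :=
    {w | ∃ j : Fin (m+n+1), ∃ u ∈ F j, ∃ v ∈ G j, w = u ×ˢ v} with h𝒰def
  refine ⟨𝒰, max BX BY, ?_, ?_, ?_⟩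
  · -- cover
    intro p
    obtain ⟨JX, hJX, hJXc⟩ := hFc p.1
    obtain ⟨JY, hJY, hJYc⟩ := hGc p.2
    have hinter : (JX ∩ JY).Nonempty := by
      rw [← Finset.card_pos]
      have h1 := Finset.card_union_add_card_inter JX JY
      have h2 : (JX ∪ JY).card ≤ m+n+1 := by
        have := Finset.card_le_univ (JX ∪ JY)
        simpa using this
      omega
    obtain ⟨j, hj⟩ := hinter
    obtain ⟨u, hu, hxu⟩ := hJX j (Finset.mem_of_mem_inter_left hj)
    obtain ⟨v, hv, hyv⟩ := hJY j (Finset.mem_of_mem_inter_right hj)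
    exact ⟨u ×ˢ v, ⟨j, u, hu, v, hv, rfl⟩, hxu, hyv⟩
  · -- bounded
    rintro w ⟨j, u, hu, v, hv, rfl⟩ p hp q hq
    show dist p q ≤ max BX BY
    rw [Prod.dist_eq]
    exact max_le_max (hFb j u hu p.1 hp.1 q.1 hq.1) (hGb j v hv p.2 hp.2 q.2 hq.2)
  · -- multiplicity
    intro p
    set S : Set (Set (X × Y)) := {w | w ∈ 𝒰 ∧ ∃ q ∈ w, dist p q < R} with hSdef
    set c : Set (X × Y) → Fin (m+n+1) := fun w =>
      if hw : ∃ j : Fin (m+n+1), ∃ u ∈ F j, ∃ v ∈ G j, w = u ×ˢ v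
      then hw.choose else 0 with hcdef
    have hinj : Set.InjOn c S := by
      rintro w ⟨hw𝒰, q, hq, hdq⟩ w' ⟨hw'𝒰, q', hq', hdq'⟩ hcc
      by_contra hne
      have hw𝒰' : ∃ j : Fin (m+n+1), ∃ u ∈ F j, ∃ v ∈ G j, w = u ×ˢ v := hw𝒰
      have hw'𝒰' : ∃ j : Fin (m+n+1), ∃ u ∈ F j, ∃ v ∈ G j, w' = u ×ˢ v := hw'𝒰
      have hcw : c w = hw𝒰'.choose := by rw [hcdef]; simp only [dif_pos hw𝒰']
      have hcw' : c w' = hw'𝒰'.choose := by rw [hcdef]; simp only [dif_pos hw'𝒰']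
      obtain ⟨u, hu, v, hv, hweq⟩ := hw𝒰'.choose_spec
      obtain ⟨u', hu', v', hv', hw'eq⟩ := hw'𝒰'.choose_spec
      have hjj : hw𝒰'.choose = hw'𝒰'.choose := by rw [← hcw, ← hcw', hcc]
      rw [← hjj] at hu' hv'
      subst hweq hw'eq
      have hq1 : dist q.1 q'.1 < 2*R + 1 := by
        have h1 : dist q q' ≤ dist q p + dist p q' := dist_triangle q p q'
        have h2 : dist q p = dist p q := dist_comm q p
        have h3 : dist q.1 q'.1 ≤ dist q q' := by
          rw [Prod.dist_eq]; exact le_max_left _ _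
        linarith
      have hq2 : dist q.2 q'.2 < 2*R + 1 := by
        have h1 : dist q q' ≤ dist q p + dist p q' := dist_triangle q p q'
        have h2 : dist q p = dist p q := dist_comm q p
        have h3 : dist q.2 q'.2 ≤ dist q q' := by
          rw [Prod.dist_eq]; exact le_max_right _ _
        linarith
      by_cases huu : u = u'
      · have hvv : v ≠ v' := by
          rintro rfl; rw [huu] at hne; exact hne rfl
        exact absurd (hGs _ v hv v' hv' hvv q.2 hq.2 q'.2 hq'.2) (by linarith)
      · exact absurd (hFs _ u hu u' hu' huu q.1 hq.1 q'.1 hq'.1) (by linarith)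
    have hSfin : S.Finite :=
      Set.Finite.of_finite_image (Set.toFinite _) hinj
    refine ⟨hSfin, ?_⟩
    have h1 : S.ncard ≤ (Set.univ : Set (Fin (m+n+1))).ncard :=
      Set.ncard_le_ncard_of_injOn c (fun a _ => Set.mem_univ _) hinj (Set.toFinite _)
    have h2 : (Set.univ : Set (Fin (m+n+1))).ncard = m+n+1 := by
      rw [Set.ncard_univ]; simp
    omega
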